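/- Let D be a directed graph representing a gammoid with sources S and sinks Z, where each source has in-degree 0 and out-degree 1 and each sink has in-degree 1 and out-degree 0. If the gammoid is k-colorable with all color classes of full rank r = |Z| (so |S| = kr), then every sink z has exactly k units of incoming flow in the superimposed flow f obtained from the k vertex-disjoint-path systems, and consequently z forms a singleton tree in the forest of edges with flow strictly between 0 and k. -/

import Mathlib

/-- If a nonempty chain ends at `z` and starts at some `s ≠ z`, then it has a
last edge `[u, z]` as a suffix, with `E u z`. -/
lemma exists_last_edge {V : Type*} {E : V → V → Prop} {p : List V} {s z : V}
    (hc : p.Chain' E) (hhead : p.head? = some s) (hlast : p.getLast? = some z)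
    (hne : s ≠ z) : ∃ u, E u z ∧ [u, z] <:+ p := by
  have hpne : p ≠ [] := by rintro rfl; simp at hlast
  have hdne : p.dropLast ≠ [] := by
    intro h
    match p, hpne with
    | [a], _ =>
        simp at hhead hlast
        exact hne (hhead.symm.trans hlast)
    | a :: b :: t, _ => simp [List.dropLast] at h
  set u := p.dropLast.getLast hdne with hu
  have h1 : p.dropLast.dropLast ++ [u] = p.dropLast :=
    List.dropLast_append_getLast hdne
  have hzl : p.getLast hpne = z := by
    have := List.getLast?_eq_getLast hpne
    rw [this] at hlast; exact (Option.some_injective _ hlast)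
  have h2 : p.dropLast ++ [z] = p := by
    rw [← hzl]; exact List.dropLast_append_getLast hpne
  have hsuf : [u, z] <:+ p := by
    refine ⟨p.dropLast.dropLast, ?_⟩
    rw [show p.dropLast.dropLast ++ [u, z]
        = (p.dropLast.dropLast ++ [u]) ++ [z] by simp, h1, h2]
  exact ⟨u, List.isChain_pair.mp (hc.infix hsuf.isInfix), hsuf⟩

open Finset in
/-- Observation 3: In a graphical representation of a
`k`-colorable gammoid with all color classes of full rank `r = |Z|`, every
sink `z` receives exactly `k` units of the superimposed flow `f`, and hence
`z` is incident to no edge with flow strictly between `0` and `k` (it forms a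
singleton tree in the corresponding forest). -/
theorem sink_is_singleton_tree
    {V : Type*} [Fintype V] [DecidableEq V]
    (E : V → V → Prop) [DecidableRel E]
    (S Z : Finset V) (r k : ℕ) (hr : Z.card = r)
    -- sources: in-degree 0, out-degree 1
    (hsrc : ∀ s ∈ S, (∀ u, ¬ E u s) ∧ (univ.filter fun u => E s u).card = 1)
    -- sinks: in-degree 1, out-degree 0
    (hsinkin : ∀ z ∈ Z, (univ.filter fun u => E u z).card = 1)
    (hsinkout : ∀ z ∈ Z, ∀ u, ¬ E z u)
    (hS : S.card = k * r)
    -- the k color classes, each of full rank r, partitioning S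
    (C : Fin k → Finset V)
    (hCsub : ∀ i, C i ⊆ S) (hCcard : ∀ i, (C i).card = r)
    (hCdisj : ∀ i j, i ≠ j → Disjoint (C i) (C j))
    (hCcover : ∀ s ∈ S, ∃ i, s ∈ C i)
    -- for each color class, r vertex-disjoint directed paths from C i to Z
    (P : Fin k → Fin r → List V)
    (hchain : ∀ i j, (P i j).Chain' E)
    (hnodup : ∀ i j, (P i j).Nodup)
    (hdisjpaths : ∀ i, ∀ j₁ j₂, j₁ ≠ j₂ →
      Disjoint (P i j₁).toFinset (P i j₂).toFinset)
    (hstart : ∀ i, ∀ s ∈ C i, ∃! j, (P i j).head? = some s)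
    (hend : ∀ i, ∀ z ∈ Z, ∃! j, (P i j).getLast? = some z)
    -- the superimposed flow: f(u,v) = number of paths traversing edge (u,v)
    (f : V → V → ℕ)
    (hf : ∀ u v : V,
      f u v = Nat.card {ij : Fin k × Fin r // [u, v] <:+: P ij.1 ij.2}) :
    ∀ z ∈ Z,
      (∑ u, f u z) = k ∧
      (∀ u, ¬ (0 < f u z ∧ f u z < k)) ∧
      (∀ u, ¬ (0 < f z u ∧ f z u < k)) := by
  intro z hz
  classical
  -- flow out of z is zero
  have hout : ∀ u, f z u = 0 := by
    intro u
    rw [hf]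
    have : IsEmpty {ij : Fin k × Fin r // [z, u] <:+: P ij.1 ij.2} := by
      refine ⟨fun x => ?_⟩
      obtain ⟨⟨i, j⟩, h⟩ := x
      exact hsinkout z hz u (List.isChain_pair.mp ((hchain i j).infix h))
    exact Nat.card_of_isEmpty
  -- unique in-neighbor u₀ of z
  obtain ⟨u₀, hu₀⟩ := Finset.card_eq_one.mp (hsinkin z hz)
  have huniq : ∀ u, E u z → u = u₀ := by
    intro u h
    have hmem : u ∈ Finset.univ.filter fun v => E v z := by simpa using h
    rw [hu₀] at hmem
    simpa using hmem
  -- if z lies on a path, it is its last vertex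
  have hlastz : ∀ i j, z ∈ P i j → (P i j).getLast? = some z := by
    intro i j hmem
    obtain ⟨s, t, hst⟩ := List.append_of_mem hmem
    cases t with
    | nil => rw [hst]; exact List.getLast?_concat
    | cons x t' =>
        exfalso
        have hc := hchain i j
        rw [hst] at hc
        have hc2 : List.Chain' E (z :: x :: t') :=
          hc.suffix ⟨s, rfl⟩
        exact hsinkout z hz x (List.isChain_cons_cons.mp hc2).1
  -- every path starts at some vertex of its color class
  have hheads : ∀ i j, ∃ s ∈ C i, (P i j).head? = some s := by
    intro i j
    set g : {x // x ∈ C i} → Fin r :=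
      fun s => (hstart i s.1 s.2).choose with hg
    have hgspec : ∀ s : {x // x ∈ C i}, (P i (g s)).head? = some s.1 :=
      fun s => (hstart i s.1 s.2).choose_spec.1
    have hginj : Function.Injective g := by
      intro s₁ s₂ h
      have h1 := hgspec s₁
      have h2 := hgspec s₂
      rw [h] at h1
      exact Subtype.ext (Option.some_injective _ (h1.symm.trans h2))
    have hbij : Function.Bijective g := by
      rw [Fintype.bijective_iff_injective_and_card]
      exact ⟨hginj, by simp [Fintype.card_coe, hCcard i]⟩
    obtain ⟨s, hs⟩ := hbij.2 j
    exact ⟨s.1, s.2, by rw [← hs]; exact hgspec s⟩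
  -- heads are in S, hence differ from z
  have hheadne : ∀ s ∈ S, s ≠ z := by
    intro s hs heq
    have h1 := (hsrc s hs).2
    have h0 : (Finset.univ.filter fun u => E s u) = ∅ := by
      apply Finset.filter_eq_empty_iff.mpr
      intro u _
      rw [heq]
      exact hsinkout z hz u
    rw [h0] at h1
    simp at h1
  -- for each color there is a unique path ending at z, and it ends with [u₀, z]
  have hFmem : ∀ i, [u₀, z] <:+: P i ((hend i z hz).choose) := by
    intro i
    set j := (hend i z hz).choose with hj
    have hlast : (P i j).getLast? = some z := (hend i z hz).choose_spec.1
    obtain ⟨s, hsC, hhead⟩ := hheads i j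
    obtain ⟨u, hEu, hsuf⟩ :=
      exists_last_edge (hchain i j) hhead hlast (hheadne s (hCsub i hsC))
    have := huniq u hEu
    subst this
    exact hsuf.isInfix
  -- the counting bijection
  have hcount : f u₀ z = k := by
    rw [hf]
    have hbij : Function.Bijective
        (fun i : Fin k =>
          (⟨(i, (hend i z hz).choose), hFmem i⟩ :
            {ij : Fin k × Fin r // [u₀, z] <:+: P ij.1 ij.2})) := by
      constructor
      · intro i₁ i₂ h
        have := congrArg (fun x => x.1.1) h
        exact this
      · rintro ⟨⟨i, j⟩, h⟩
        refine ⟨i, ?_⟩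
        have hzmem : z ∈ P i j := h.mem (by simp)
        have hjeq : (hend i z hz).choose = j :=
          ((hend i z hz).choose_spec.2 j (hlastz i j hzmem)).symm
        apply Subtype.ext
        show (i, (hend i z hz).choose) = (i, j)
        rw [hjeq]
    have := Nat.card_eq_of_bijective _ hbij
    simpa using this.symm
  -- flow into z from anything other than u₀ is zero
  have hzero : ∀ u, u ≠ u₀ → f u z = 0 := by
    intro u hu
    rw [hf]
    have : IsEmpty {ij : Fin k × Fin r // [u, z] <:+: P ij.1 ij.2} := by
      refine ⟨fun x => ?_⟩
      obtain ⟨⟨i, j⟩, h⟩ := x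
      exact hu (huniq u (List.isChain_pair.mp ((hchain i j).infix h)))
    exact Nat.card_of_isEmpty
  refine ⟨?_, ?_, ?_⟩
  · rw [Finset.sum_eq_single u₀ (fun u _ hu => hzero u hu)
      (fun h => absurd (Finset.mem_univ u₀) h)]
    exact hcount
  · intro u ⟨h1, h2⟩
    by_cases hu : u = u₀
    · subst hu; rw [hcount] at h2; exact lt_irrefl _ h2
    · rw [hzero u hu] at h1; exact lt_irrefl _ h1
  · intro u ⟨h1, _⟩
    rw [hout u] at h1
    exact lt_irrefl _ h1
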